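/- The generalised dicyclic group Dic(A,y,x) is isomorphic to Q₈ × C₂^ℓ (for some ℓ ≥ 0) if and only if A ≅ C₄ × C₂^ℓ and y is the unique non-identity square in A. -/

import Mathlib

namespace Stmt5



lemma pow_val_add {M : Type*} [Monoid M] {n : ℕ} [NeZero n] {c : M} (hc : c ^ n = 1)
    (i j : ZMod n) : c ^ (i + j).val = c ^ i.val * c ^ j.val := by
  rw [ZMod.val_add, ← pow_eq_pow_mod _ hc, pow_add]

lemma pow_val_natCast {M : Type*} [Monoid M] {n : ℕ} [NeZero n] {c : M} (hc : c ^ n = 1)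
    (k : ℕ) : c ^ ((k : ZMod n)).val = c ^ k := by
  rw [ZMod.val_natCast, ← pow_eq_pow_mod _ hc]



variable {R : Type*} [Group R] {A : Subgroup R} {y x : R}

lemma mem_or_mul (hx : x ∉ A) (hAind : A.index = 2) (r : R) (hr : r ∉ A) :
    ∃ a ∈ A, r = a * x := by
  obtain ⟨c, hc⟩ := Subgroup.index_eq_two_iff.mp hAind
  have hxc : x * c ∈ A := ((hc x).resolve_right (fun h => hx h.1)).1
  have hrc : r * c ∈ A := ((hc r).resolve_right (fun h => hr h.1)).1
  exact ⟨(r * c) * (x * c)⁻¹, A.mul_mem hrc (A.inv_mem hxc), by group⟩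

lemma mul_x_eq (hconj : ∀ a ∈ A, x⁻¹ * a * x = a⁻¹) {a : R} (ha : a ∈ A) :
    a * x = x * a⁻¹ := by
  have h := hconj a ha
  calc a * x = x * (x⁻¹ * a * x) := by group
  _ = x * a⁻¹ := by rw [h]

lemma pow_mul_x_eq (hconj : ∀ a ∈ A, x⁻¹ * a * x = a⁻¹) {a : R} (ha : a ∈ A) (n : ℕ) :
    a ^ n * x = x * (a ^ n)⁻¹ := mul_x_eq hconj (A.pow_mem ha n)

lemma sq_outside (hx : x ∉ A) (hx2 : x ^ 2 = y)
    (hconj : ∀ a ∈ A, x⁻¹ * a * x = a⁻¹) (hAind : A.index = 2)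
    (r : R) (hr : r ∉ A) : r ^ 2 = y := by
  obtain ⟨a, ha, rfl⟩ := mem_or_mul hx hAind r hr
  have h2 : a⁻¹ * x = x * a := by rw [mul_x_eq hconj (A.inv_mem ha), inv_inv]
  calc (a * x) ^ 2 = a * (x * a) * x := by rw [sq]; group
  _ = a * (a⁻¹ * x) * x := by rw [← h2]
  _ = x ^ 2 := by rw [sq]; group
  _ = y := hx2







lemma q8_sq : ∀ q : QuaternionGroup 2, q ^ 2 = 1 ∨ q ^ 2 = QuaternionGroup.a 2 := by decide

lemma E_sq {ℓ : ℕ} (u : Multiplicative (Fin ℓ → ZMod 2)) : u ^ 2 = 1 := by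
  have h2 : ∀ z : ZMod 2, z + z = 0 := by decide
  apply Multiplicative.toAdd.injective
  rw [sq, toAdd_mul]
  exact funext fun i => h2 _

lemma prod_sq {ℓ : ℕ} (g : QuaternionGroup 2 × Multiplicative (Fin ℓ → ZMod 2)) :
    g ^ 2 = 1 ∨ g ^ 2 = (QuaternionGroup.a 2, 1) := by
  rcases q8_sq g.1 with h | h
  · exact Or.inl (Prod.ext (by simpa using h) (by simpa using E_sq g.2))
  · exact Or.inr (Prod.ext (by simpa using h) (by simpa using E_sq g.2))

/-- transferred squares fact -/
lemma sq_cases {R : Type*} [Group R] {A : Subgroup R} {y x : R} {ℓ : ℕ}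
    (hy1 : y ≠ 1) (hx : x ∉ A) (hx2 : x ^ 2 = y)
    (e : R ≃* QuaternionGroup 2 × Multiplicative (Fin ℓ → ZMod 2)) (r : R) :
    r ^ 2 = 1 ∨ r ^ 2 = y := by
  have hey : e y = (QuaternionGroup.a 2, 1) := by
    rcases prod_sq (e x) with h | h
    · exfalso
      apply hy1
      have : e (x ^ 2) = 1 := by rw [map_pow]; exact h
      rw [hx2] at this
      simpa using e.injective (by simpa using this)
    · rw [← hx2, map_pow]; exact h
  rcases prod_sq (e r) with h | h
  · left
    apply e.injective
    rw [map_pow, map_one]; exact h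
  · right
    apply e.injective
    rw [map_pow, hey]; exact h





lemma build_iso {R : Type*} [Group R] [Fintype R] (A : Subgroup R) (y x : R) (ℓ : ℕ)
    (hAcomm : ∀ a ∈ A, ∀ b ∈ A, a * b = b * a)
    (hy2 : y ^ 2 = 1)
    (hx : x ∉ A) (hx2 : x ^ 2 = y)
    (hconj : ∀ a ∈ A, x⁻¹ * a * x = a⁻¹)
    (hAind : A.index = 2)
    (a₀ : R) (ha₀A : a₀ ∈ A) (ha₀ : a₀ ^ 2 = y)
    (s : (Fin ℓ → ZMod 2) → R) (hsA : ∀ v, s v ∈ A)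
    (hs_add : ∀ v w, s (v + w) = s v * s w)
    (hsurjA : ∀ a ∈ A, ∃ (k : ℕ) (v : Fin ℓ → ZMod 2), a = a₀ ^ k * s v)
    (hcard : Nat.card A = 2 ^ (ℓ + 2)) :
    Nonempty (R ≃* QuaternionGroup 2 × Multiplicative (Fin ℓ → ZMod 2)) := by
  have h4 : a₀ ^ (2 * 2) = 1 := by rw [pow_mul, ha₀, hy2]
  set zp : ZMod (2 * 2) → R := fun i => a₀ ^ i.val with hzpdef
  have hzpA : ∀ i, zp i ∈ A := fun i => A.pow_mem ha₀A _
  have hzp_add : ∀ i j, zp (i + j) = zp i * zp j := fun i j => pow_val_add h4 i j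
  have hzp_x : ∀ i, zp i * x = x * (zp i)⁻¹ := fun i => mul_x_eq hconj (hzpA i)
  have hzp_sub : ∀ i j : ZMod (2 * 2), (zp i)⁻¹ * zp j = zp (j - i) := by
    intro i j
    rw [inv_mul_eq_iff_eq_mul, ← hzp_add, add_sub_cancel]
  have hzp2 : zp 2 = y := by
    show a₀ ^ (2 : ZMod (2 * 2)).val = y
    have : (2 : ZMod (2 * 2)).val = 2 := rfl
    rw [this, ha₀]
  -- the homomorphism on the quaternion factor
  let f₁ : QuaternionGroup 2 →* R := MonoidHom.mk'
    (fun q => match q with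
      | QuaternionGroup.a i => zp i
      | QuaternionGroup.xa i => x * zp i)
    (by
      rintro (i | i) (j | j)
      · show zp (i + j) = zp i * zp j
        exact hzp_add i j
      · show x * zp (j - i) = zp i * (x * zp j)
        rw [← hzp_sub i j, ← mul_assoc, ← hzp_x, mul_assoc]
      · show x * zp (i + j) = (x * zp i) * zp j
        rw [hzp_add, mul_assoc]
      · show zp (((2 : ℕ) : ZMod (2 * 2)) + j - i) = (x * zp i) * (x * zp j)
        have : (x * zp i) * (x * zp j) = x * (zp i * x) * zp j := by group
        rw [this, hzp_x, add_sub_assoc, hzp_add, ← hzp_sub i j]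
        have h2 : ((2 : ℕ) : ZMod (2 * 2)) = (2 : ZMod (2 * 2)) := by norm_cast
        rw [h2, hzp2, ← hx2, sq]
        group)
  -- basic facts about s
  have hs0 : s 0 = 1 := by
    have h0 : s 0 * s 0 = s 0 * 1 := by rw [← hs_add, add_zero, mul_one]
    exact mul_left_cancel h0
  have hvv : ∀ v : Fin ℓ → ZMod 2, v + v = 0 := by
    intro v
    funext i
    revert i
    intro i
    have : ∀ z : ZMod 2, z + z = 0 := by decide
    exact this _
  have hs_sq : ∀ v, s v * s v = 1 := fun v => by rw [← hs_add, hvv, hs0]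
  have hs_inv : ∀ v, (s v)⁻¹ = s v := fun v => by
    rw [inv_eq_iff_mul_eq_one, hs_sq]
  let f₂ : Multiplicative (Fin ℓ → ZMod 2) →* R := MonoidHom.mk'
    (fun v => s v.toAdd) (fun v w => hs_add _ _)
  have hxs : ∀ v, Commute x (s v) := by
    intro v
    have : s v * x = x * s v := by rw [mul_x_eq hconj (hsA v), hs_inv]
    exact this.symm
  have hcomm : ∀ q u, Commute (f₁ q) (f₂ u) := by
    rintro (i | i) u
    · exact hAcomm _ (hzpA i) _ (hsA _)
    · exact Commute.mul_left (hxs _) (hAcomm _ (hzpA i) _ (hsA _))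
  let f := f₁.noncommCoprod f₂ hcomm
  have hf_apply : ∀ q u, f (q, u) = f₁ q * f₂ u := fun q u => rfl
  -- elements in the range
  have ha₀r : a₀ ∈ f.range := by
    refine ⟨(QuaternionGroup.a 1, 1), ?_⟩
    rw [hf_apply]
    show zp 1 * s (Multiplicative.toAdd (1 : Multiplicative (Fin ℓ → ZMod 2))) = a₀
    have h1 : (1 : ZMod (2 * 2)).val = 1 := rfl
    show a₀ ^ (1 : ZMod (2 * 2)).val * s 0 = a₀
    rw [h1, hs0, pow_one, mul_one]
  have hxr : x ∈ f.range := by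
    refine ⟨(QuaternionGroup.xa 0, 1), ?_⟩
    rw [hf_apply]
    show (x * zp 0) * s 0 = x
    have h0 : (0 : ZMod (2 * 2)).val = 0 := rfl
    show (x * a₀ ^ (0 : ZMod (2 * 2)).val) * s 0 = x
    rw [h0, hs0, pow_zero, mul_one, mul_one]
  have hsr : ∀ v, s v ∈ f.range := by
    intro v
    refine ⟨(1, Multiplicative.ofAdd v), ?_⟩
    rw [hf_apply, map_one, one_mul]
    rfl
  have hAr : A ≤ f.range := by
    intro a ha
    obtain ⟨k, v, rfl⟩ := hsurjA a ha
    exact mul_mem (pow_mem ha₀r k) (hsr v)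
  have hrange : f.range = ⊤ := by
    have hmul := Subgroup.relIndex_mul_index hAr
    rw [hAind] at hmul
    have hdvd : f.range.index ∣ 2 := Dvd.intro_left _ hmul
    rcases (Nat.prime_two.eq_one_or_self_of_dvd _ hdvd) with h1 | h2
    · exact Subgroup.index_eq_one.mp h1
    · exfalso
      rw [h2] at hmul
      have : A.relIndex f.range = 1 := by omega
      exact hx (Subgroup.relIndex_eq_one.mp this hxr)
  have hfsurj : Function.Surjective f := MonoidHom.range_eq_top.mp hrange
  -- cardinalities
  have hcardR : Nat.card R = 2 ^ (ℓ + 3) := by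
    have := Subgroup.card_mul_index A
    rw [hcard, hAind] at this
    rw [← this]
    ring
  have hcardT : Nat.card (QuaternionGroup 2 × Multiplicative (Fin ℓ → ZMod 2)) = 2 ^ (ℓ + 3) := by
    rw [Nat.card_prod, Nat.card_eq_fintype_card, QuaternionGroup.card,
      Nat.card_congr (Multiplicative.toAdd (α := Fin ℓ → ZMod 2)),
      Nat.card_eq_fintype_card, Fintype.card_fun, ZMod.card, Fintype.card_fin, pow_add]
    ring
  have hbij : Function.Bijective f :=
    (Nat.bijective_iff_surjective_and_card ⇑f).mpr ⟨hfsurj, by rw [hcardR, hcardT]⟩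
  exact ⟨(MulEquiv.ofBijective f hbij).symm⟩





lemma build_isoA {R : Type*} [Group R] [Fintype R] (A : Subgroup R) (ℓ : ℕ)
    (hAcomm : ∀ a ∈ A, ∀ b ∈ A, a * b = b * a)
    (a₀ : R) (ha₀A : a₀ ∈ A) (h4 : a₀ ^ 4 = 1)
    (s : (Fin ℓ → ZMod 2) → R) (hsA : ∀ v, s v ∈ A)
    (hs_add : ∀ v w, s (v + w) = s v * s w)
    (hsurjA : ∀ a ∈ A, ∃ (k : ℕ) (v : Fin ℓ → ZMod 2), a = a₀ ^ k * s v)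
    (hcard : Nat.card A = 2 ^ (ℓ + 2)) :
    Nonempty (↥A ≃* Multiplicative (ZMod 4 × (Fin ℓ → ZMod 2))) := by
  have hcm : ∀ (v : Fin ℓ → ZMod 2) (m : ℕ), Commute (s v) (a₀ ^ m) :=
    fun v m => hAcomm _ (hsA v) _ (A.pow_mem ha₀A m)
  let g : Multiplicative (ZMod 4 × (Fin ℓ → ZMod 2)) →* R := MonoidHom.mk'
    (fun p => a₀ ^ (p.toAdd.1).val * s p.toAdd.2)
    (by
      intro p q
      show a₀ ^ ((p.toAdd.1 + q.toAdd.1)).val * s (p.toAdd.2 + q.toAdd.2) = _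
      rw [pow_val_add h4, hs_add]
      exact ((hcm p.toAdd.2 (q.toAdd.1.val)).symm.mul_mul_mul_comm _ _))
  have hgA : ∀ p, g p ∈ A := fun p => A.mul_mem (A.pow_mem ha₀A _) (hsA _)
  let g' : Multiplicative (ZMod 4 × (Fin ℓ → ZMod 2)) →* ↥A := g.codRestrict A hgA
  have hsurj : Function.Surjective g' := by
    rintro ⟨a, ha⟩
    obtain ⟨k, v, rfl⟩ := hsurjA a ha
    refine ⟨Multiplicative.ofAdd ((k : ZMod 4), v), ?_⟩
    apply Subtype.ext
    show a₀ ^ ((k : ZMod 4)).val * s v = a₀ ^ k * s v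
    rw [pow_val_natCast h4]
  have hcards : Nat.card (Multiplicative (ZMod 4 × (Fin ℓ → ZMod 2))) = Nat.card ↥A := by
    rw [hcard, Nat.card_congr (Multiplicative.toAdd (α := ZMod 4 × (Fin ℓ → ZMod 2))),
      Nat.card_prod, Nat.card_eq_fintype_card, ZMod.card,
      Nat.card_eq_fintype_card, Fintype.card_fun, ZMod.card, Fintype.card_fin, pow_add]
    ring
  have hbij : Function.Bijective g' :=
    (Nat.bijective_iff_surjective_and_card ⇑g').mpr ⟨hsurj, hcards⟩
  exact ⟨(MulEquiv.ofBijective g' hbij).symm⟩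





lemma exists_s {R : Type*} [Group R] [Fintype R] (A : Subgroup R) (y : R) (ℓ : ℕ)
    (hAcomm : ∀ a ∈ A, ∀ b ∈ A, a * b = b * a)
    (hy : y ∈ A) (hy2 : y ^ 2 = 1) (hy1 : y ≠ 1)
    (a₀ : R) (ha₀A : a₀ ∈ A) (ha₀ : a₀ ^ 2 = y)
    (hsqA : ∀ a ∈ A, a ^ 2 = 1 ∨ a ^ 2 = y)
    (hcard : Nat.card A = 2 ^ (ℓ + 2)) :
    ∃ s : (Fin ℓ → ZMod 2) → R,
      (∀ v, s v ∈ A) ∧ (∀ v w, s (v + w) = s v * s w) ∧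
      (∀ a ∈ A, ∃ (k : ℕ) (v : Fin ℓ → ZMod 2), a = a₀ ^ k * s v) := by
  letI : CommGroup ↥A :=
    { (inferInstance : Group ↥A) with
      mul_comm := fun a b => Subtype.ext (hAcomm a a.2 b b.2) }
  -- the subgroup of elements of order dividing 2
  let K : Subgroup ↥A :=
    { carrier := {a : ↥A | a ^ 2 = 1}
      one_mem' := one_pow 2
      mul_mem' := by
        intro a b ha hb
        show (a * b) ^ 2 = 1
        rw [mul_pow, ha, hb, one_mul]
      inv_mem' := by
        intro a ha
        show (a⁻¹) ^ 2 = 1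
        rw [inv_pow, ha, inv_one] }
  have hKmem : ∀ a : ↥A, a ∈ K ↔ a ^ 2 = 1 := fun a => Iff.rfl
  set y' : ↥A := ⟨y, hy⟩ with hy'def
  set a₀' : ↥A := ⟨a₀, ha₀A⟩ with ha₀'def
  have hy'2 : y' ^ 2 = 1 := Subtype.ext (by simpa using hy2)
  have hy'1 : y' ≠ 1 := fun h => hy1 (congrArg Subtype.val h)
  have ha₀'2 : a₀' ^ 2 = y' := Subtype.ext (by simpa using ha₀)
  have hyK : y' ∈ K := hy'2
  have hsq' : ∀ a : ↥A, a ^ 2 = 1 ∨ a ^ 2 = y' := by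
    intro a
    rcases hsqA a.1 a.2 with h | h
    · exact Or.inl (Subtype.ext (by simpa using h))
    · exact Or.inr (Subtype.ext (by simpa using h))
  -- K has index 2 in A
  have hKind : K.index = 2 := by
    rw [Subgroup.index_eq_two_iff]
    refine ⟨a₀', fun b => ?_⟩
    rcases hsq' b with h | h
    · refine Or.inr ⟨h, ?_⟩
      intro hb
      rw [hKmem, mul_pow, h, one_mul, ha₀'2] at hb
      exact hy'1 hb
    · refine Or.inl ⟨?_, ?_⟩
      · rw [hKmem, mul_pow, h, ha₀'2, ← sq, hy'2]
      · intro hb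
        rw [hKmem] at hb
        rw [hb] at h
        exact hy'1 h.symm
  have hcardK : Nat.card ↥K = 2 ^ (ℓ + 1) := by
    have h1 := Subgroup.card_mul_index K
    rw [hKind, hcard] at h1
    have : 2 ^ (ℓ + 2) = 2 ^ (ℓ + 1) * 2 := by ring
    rw [this] at h1
    exact Nat.eq_of_mul_eq_mul_right (by norm_num) h1
  -- K as a vector space over ZMod 2
  letI : Module (ZMod 2) (Additive ↥K) := AddCommGroup.zmodModule (by
    intro v
    show (2 : ℕ) • v = 0
    apply Additive.toMul.injective
    rw [toMul_nsmul]
    apply Subtype.ext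
    rw [SubgroupClass.coe_pow]
    exact (Additive.toMul v).2)
  haveI : Finite ↥K := Subtype.finite
  letI : Fintype (Additive ↥K) := Fintype.ofFinite _
  haveI : Module.Finite (ZMod 2) (Additive ↥K) := Module.Finite.of_finite
  set v₀ : Additive ↥K := Additive.ofMul (⟨y', hyK⟩ : ↥K) with hv₀def
  have hv0 : v₀ ≠ (0 : Additive ↥K) := by
    intro h
    apply hy'1
    have h1 : (⟨y', hyK⟩ : ↥K) = (1 : ↥K) := h
    exact congrArg Subtype.val h1
  have li : LinearIndepOn (ZMod 2) id ({v₀} : Set (Additive ↥K)) :=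
    LinearIndepOn.singleton hv0
  let b := Module.Basis.extend li
  letI := FiniteDimensional.fintypeBasisIndex b
  have hfr : Module.finrank (ZMod 2) (Additive ↥K) = ℓ + 1 := by
    have h := Module.card_eq_pow_finrank (K := ZMod 2) (V := Additive ↥K)
    rw [ZMod.card] at h
    have hc : Fintype.card (Additive ↥K) = 2 ^ (ℓ + 1) := by
      rw [← Nat.card_eq_fintype_card, Nat.card_congr (Additive.toMul (α := ↥K)), hcardK]
    rw [hc] at h
    exact (Nat.pow_right_injective (le_refl 2) h.symm)
  have hcι : Fintype.card ↑(li.extend (Set.subset_univ _)) = ℓ + 1 := by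
    rw [← Module.finrank_eq_card_basis b, hfr]
  let y₀ : ↑(li.extend (Set.subset_univ _)) :=
    ⟨v₀, li.subset_extend (Set.subset_univ _) rfl⟩
  let e₀ := Fintype.equivFinOfCardEq hcι
  let eqv := e₀.trans (Equiv.swap (e₀ y₀) 0)
  let b' := b.reindex eqv
  have hb'0 : b' (0 : Fin (ℓ + 1)) = v₀ := by
    rw [Module.Basis.reindex_apply]
    have he : eqv y₀ = 0 := by
      show (Equiv.swap (e₀ y₀) 0) (e₀ y₀) = 0
      rw [Equiv.swap_apply_left]
    have he2 : eqv.symm 0 = y₀ := by rw [← he, Equiv.symm_apply_apply]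
    rw [he2]
    exact Module.Basis.extend_apply_self li y₀
  let u : Fin ℓ → ↥A := fun i => ((Additive.toMul (b' i.succ) : ↥K) : ↥A)
  have hu2 : ∀ i, u i ^ 2 = 1 := fun i => (Additive.toMul (b' i.succ)).2
  let sA : (Fin ℓ → ZMod 2) → ↥A := fun v => ∏ i, u i ^ (v i).val
  have hsA_add : ∀ v w, sA (v + w) = sA v * sA w := by
    intro v w
    show (∏ i, u i ^ ((v + w) i).val) = (∏ i, u i ^ (v i).val) * ∏ i, u i ^ (w i).val
    rw [← Finset.prod_mul_distrib]
    refine Finset.prod_congr rfl fun i _ => ?_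
    exact pow_val_add (hu2 i) _ _
  have hrep : ∀ k : ↥K, ∃ (c0 : ℕ) (v : Fin ℓ → ZMod 2),
      (k : ↥A) = y' ^ c0 * sA v := by
    intro k
    have hsum := Module.Basis.sum_repr b' (Additive.ofMul k)
    have hsm : ∀ (z : ZMod 2) (w : Additive ↥K), z • w = z.val • w := by
      intro z w
      conv_lhs => rw [← ZMod.natCast_rightInverse z]
      rw [Nat.cast_smul_eq_nsmul]
    simp only [hsm] at hsum
    have hk := congrArg Additive.toMul hsum
    rw [toMul_sum] at hk
    simp only [toMul_nsmul] at hk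
    have hk2 := congrArg (fun z : ↥K => (z : ↥A)) hk
    simp only [toMul_ofMul, SubmonoidClass.coe_finset_prod, SubgroupClass.coe_pow] at hk2
    rw [Fin.prod_univ_succ] at hk2
    have hb0c : ((Additive.toMul (b' 0) : ↥K) : ↥A) = y' := by rw [hb'0]; rfl
    rw [hb0c] at hk2
    exact ⟨(b'.repr (Additive.ofMul k) 0).val, fun i => b'.repr (Additive.ofMul k) i.succ, hk2.symm⟩
  have hmain : ∀ a' : ↥A, ∃ (m : ℕ) (v : Fin ℓ → ZMod 2), a' = a₀' ^ m * sA v := by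
    intro a'
    rcases hsq' a' with h | h
    · obtain ⟨c0, v, hv⟩ := hrep ⟨a', h⟩
      exact ⟨2 * c0, v, by rw [pow_mul, ha₀'2]; exact hv⟩
    · have h2 : (a₀'⁻¹ * a') ^ 2 = 1 := by
        rw [mul_pow, inv_pow, h, ha₀'2, inv_mul_cancel]
      obtain ⟨c0, v, hv⟩ := hrep ⟨a₀'⁻¹ * a', h2⟩
      refine ⟨2 * c0 + 1, v, ?_⟩
      have hstep : a' = a₀' * (y' ^ c0 * sA v) := by
        rw [← hv]
        group
      rw [hstep, pow_add, pow_mul, ha₀'2, pow_one, mul_assoc]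
      exact mul_left_comm _ _ _
  refine ⟨fun v => ((sA v : ↥A) : R), fun v => (sA v).2, ?_, ?_⟩
  · intro v w
    have h6 := congrArg Subtype.val (hsA_add v w)
    simpa using h6
  · intro a ha
    obtain ⟨m, v, hv⟩ := hmain ⟨a, ha⟩
    refine ⟨m, v, ?_⟩
    have h5 := congrArg Subtype.val hv
    simpa using h5



end Stmt5
/-- The generalised dicyclic group `R = Dic(A,y,x)` is isomorphic to
`Q₈ × C₂^ℓ` if and only if `A ≅ C₄ × C₂^ℓ` and `y` is the unique
non-identity square in `A`.  Here `Q₈` is `QuaternionGroup 2` and `C₂^ℓ` is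
modelled as `Multiplicative (Fin ℓ → ZMod 2)`. -/
theorem stmt5 {R : Type*} [Group R] [Fintype R] (A : Subgroup R) (y x : R)
    (hAcomm : ∀ a ∈ A, ∀ b ∈ A, a * b = b * a)
    (hexp : ∃ a ∈ A, a ^ 2 ≠ 1)
    (hy : y ∈ A) (hy2 : y ^ 2 = 1) (hy1 : y ≠ 1)
    (hx : x ∉ A) (hx2 : x ^ 2 = y)
    (hconj : ∀ a ∈ A, x⁻¹ * a * x = a⁻¹)
    (hAind : A.index = 2) (ℓ : ℕ) :
    Nonempty (R ≃* QuaternionGroup 2 × Multiplicative (Fin ℓ → ZMod 2)) ↔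
      (Nonempty (A ≃* Multiplicative (ZMod 4 × (Fin ℓ → ZMod 2))) ∧
        (∃ a ∈ A, a ^ 2 = y) ∧
        (∀ b ∈ A, b ≠ 1 → (∃ a ∈ A, a ^ 2 = b) → b = y)) := by
  constructor
  · rintro ⟨e⟩
    have hsq : ∀ r : R, r ^ 2 = 1 ∨ r ^ 2 = y := Stmt5.sq_cases hy1 hx hx2 e
    obtain ⟨a₀, ha₀A, ha₀ne⟩ := hexp
    have ha₀ : a₀ ^ 2 = y := (hsq a₀).resolve_left ha₀ne
    have huniq : ∀ b ∈ A, b ≠ 1 → (∃ a ∈ A, a ^ 2 = b) → b = y := by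
      rintro b hb hb1 ⟨a, ha, rfl⟩
      exact (hsq a).resolve_left hb1
    have hcardR : Nat.card R = 2 ^ (ℓ + 3) := by
      rw [Nat.card_congr e.toEquiv, Nat.card_prod, Nat.card_eq_fintype_card,
        QuaternionGroup.card,
        Nat.card_congr (Multiplicative.toAdd (α := Fin ℓ → ZMod 2)),
        Nat.card_eq_fintype_card, Fintype.card_fun, ZMod.card, Fintype.card_fin, pow_add]
      ring
    have hcardA : Nat.card A = 2 ^ (ℓ + 2) := by
      have h1 := Subgroup.card_mul_index A
      rw [hAind, hcardR] at h1
      have h2 : 2 ^ (ℓ + 3) = 2 ^ (ℓ + 2) * 2 := by ring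
      rw [h2] at h1
      exact Nat.eq_of_mul_eq_mul_right (by norm_num) h1
    obtain ⟨s, hsA, hs_add, hsurjA⟩ := Stmt5.exists_s A y ℓ hAcomm hy hy2 hy1 a₀ ha₀A ha₀
      (fun a _ => hsq a) hcardA
    have h4 : a₀ ^ 4 = 1 := by
      rw [show (4 : ℕ) = 2 * 2 from rfl, pow_mul, ha₀, hy2]
    exact ⟨Stmt5.build_isoA A ℓ hAcomm a₀ ha₀A h4 s hsA hs_add hsurjA hcardA,
      ⟨a₀, ha₀A, ha₀⟩, huniq⟩
  · rintro ⟨⟨eA⟩, ⟨a₀, ha₀A, ha₀⟩, huniq⟩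
    have hsq : ∀ a ∈ A, a ^ 2 = 1 ∨ a ^ 2 = y := by
      intro a ha
      by_cases h : a ^ 2 = 1
      · exact Or.inl h
      · exact Or.inr (huniq _ (A.pow_mem ha 2) h ⟨a, ha, rfl⟩)
    have hcardA : Nat.card A = 2 ^ (ℓ + 2) := by
      rw [Nat.card_congr eA.toEquiv,
        Nat.card_congr (Multiplicative.toAdd (α := ZMod 4 × (Fin ℓ → ZMod 2))),
        Nat.card_prod, Nat.card_eq_fintype_card, ZMod.card,
        Nat.card_eq_fintype_card, Fintype.card_fun, ZMod.card, Fintype.card_fin, pow_add]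
      ring
    obtain ⟨s, hsA, hs_add, hsurjA⟩ := Stmt5.exists_s A y ℓ hAcomm hy hy2 hy1 a₀ ha₀A ha₀
      hsq hcardA
    exact Stmt5.build_iso A y x ℓ hAcomm hy2 hx hx2 hconj hAind a₀ ha₀A ha₀ s hsA hs_add
      hsurjA hcardA
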